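/- Let d = 4, ℓ = 5/3, γ > ℓ^{-1/2}, and let U(ξ) = Σ_{i≥0} U_i·ξ^i be a formal power series with real coefficients satisfying U₀ = ε, U₁ = (λ₋ − c₄)/c₂, and the formal power series identity Δ_Y(ξ, U(ξ))·U′(ξ) = Δ_U(ξ, U(ξ)). Then for every n ≥ 2: (n·λ₋ − λ₊)·U_n = [ξⁿ]Δ_U(ξ, T_{n−1}(ξ)) − Σ_{i=2}^{n} (n+1−i)·U_{n+1−i}·[ξⁱ]Δ_Y(ξ, T_{n−1}(ξ)), where T_{n−1}(ξ) = Σ_{i=0}^{n−1} U_i·ξ^i; in particular the right-hand side does not involve U_n. Moreover [ξⁿ]Δ_U(ξ, T_n(ξ)) = [ξⁿ]Δ_U(ξ, T_{n−1}(ξ)) + c₁·U_n and [ξⁿ]Δ_Y(ξ, T_n(ξ)) = [ξⁿ]Δ_Y(ξ, T_{n−1}(ξ)) + c₂·U_n. -/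

import Mathlib

noncomputable section

open Polynomial

namespace Stmt7

def epsP (γ : ℝ) : ℝ := (5/3) * γ ^ 2 - 1

def Aval (γ : ℝ) : ℝ := 4 + 1 - (4 - 1 - 2 * (5/3)) * γ

def Bval : ℝ := 2 * 4 - 1 - 5/3

def c1 (γ : ℝ) : ℝ := 2 * epsP γ

def c2 : ℝ := -1

def c3 (γ : ℝ) : ℝ := 2 * epsP γ * ((4 - 1 - 2 * (5/3)) * γ - 2)

def c4 (γ : ℝ) : ℝ := (4 - 1) * epsP γ + Aval γ

def lamMinus (γ : ℝ) : ℝ :=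
  ((c1 γ + c4 γ) - Real.sqrt ((c1 γ + c4 γ) ^ 2 - 4 * (c1 γ * c4 γ - c2 * c3 γ))) / 2

def lamPlus (γ : ℝ) : ℝ :=
  ((c1 γ + c4 γ) + Real.sqrt ((c1 γ + c4 γ) ^ 2 - 4 * (c1 γ * c4 γ - c2 * c3 γ))) / 2

/-- `f` as a polynomial: `f(Y) = −ε − A·Y + B·Y²`. -/
def fPoly (γ : ℝ) : Polynomial ℝ := C (-epsP γ) + C (-Aval γ) * X + C Bval * X ^ 2

/-- `Δ_U(ξ, P(ξ))` as a polynomial, for `d = 4`. -/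
def DelUPoly (γ : ℝ) (P : Polynomial ℝ) : Polynomial ℝ :=
  2 * P * (P + fPoly γ + C 3 * X * (1 - X))

/-- `Δ_Y(ξ, P(ξ))` as a polynomial, for `d = 4`. -/
def DelYPoly (γ : ℝ) (P : Polynomial ℝ) : Polynomial ℝ :=
  (C 4 * X - 1) * P + (X - 1) * fPoly γ

/-- The truncation `T_m(ξ) = Σ_{i=0}^{m} U_i ξ^i`. -/
def Tpoly (U : ℕ → ℝ) (m : ℕ) : Polynomial ℝ :=
  ∑ i ∈ Finset.range (m + 1), C (U i) * X ^ i

/-- `f` as a formal power series. -/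
def fSeries (γ : ℝ) : PowerSeries ℝ :=
  PowerSeries.C (R := ℝ) (-epsP γ) + PowerSeries.C (R := ℝ) (-Aval γ) * PowerSeries.X
    + PowerSeries.C (R := ℝ) Bval * PowerSeries.X ^ 2

/-- Series versions. -/
def SY (γ : ℝ) (U : ℕ → ℝ) : PowerSeries ℝ :=
  (PowerSeries.C (R := ℝ) 4 * PowerSeries.X - 1) * PowerSeries.mk U + (PowerSeries.X - 1) * fSeries γ

def SU (γ : ℝ) (U : ℕ → ℝ) : PowerSeries ℝ :=
  2 * PowerSeries.mk U * (PowerSeries.mk U + fSeries γ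
    + PowerSeries.C (R := ℝ) 3 * PowerSeries.X * (1 - PowerSeries.X))

lemma coeff_Tpoly (U : ℕ → ℝ) (m i : ℕ) :
    (Tpoly U m).coeff i = if i ≤ m then U i else 0 := by
  rw [Tpoly, Polynomial.finset_sum_coeff]
  simp only [Polynomial.coeff_C_mul, Polynomial.coeff_X_pow, mul_ite, mul_one, mul_zero]
  rw [Finset.sum_ite_eq]
  simp [Nat.lt_succ_iff]

lemma coeff_mul_congr (A A' B B' : PowerSeries ℝ) (n : ℕ)
    (hA : ∀ i ≤ n, PowerSeries.coeff i A = PowerSeries.coeff i A')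
    (hB : ∀ i ≤ n, PowerSeries.coeff i B = PowerSeries.coeff i B') :
    PowerSeries.coeff n (A*B) = PowerSeries.coeff n (A'*B') := by
  rw [PowerSeries.coeff_mul, PowerSeries.coeff_mul]
  refine Finset.sum_congr rfl fun p hp => ?_
  rw [Finset.HasAntidiagonal.mem_antidiagonal] at hp
  rw [hA p.1 (by omega), hB p.2 (by omega)]

lemma coe_two : ((2 : Polynomial ℝ) : PowerSeries ℝ) = 2 := by
  have : (2 : Polynomial ℝ) = C 2 := by rw [map_ofNat]
  rw [this, Polynomial.coe_C, map_ofNat]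

lemma coe_fPoly (γ : ℝ) : ((fPoly γ : Polynomial ℝ) : PowerSeries ℝ) = fSeries γ := by
  simp [fPoly, fSeries]

lemma coeff_coe_Tpoly (U : ℕ → ℝ) (m i : ℕ) (h : i ≤ m) :
    PowerSeries.coeff i ((Tpoly U m : Polynomial ℝ) : PowerSeries ℝ)
      = PowerSeries.coeff i (PowerSeries.mk U) := by
  rw [Polynomial.coeff_coe, coeff_Tpoly, if_pos h, PowerSeries.coeff_mk]

lemma coeff_DelY_eq (γ : ℝ) (U : ℕ → ℝ) (m i : ℕ) (h : i ≤ m) :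
    (DelYPoly γ (Tpoly U m)).coeff i = PowerSeries.coeff i (SY γ U) := by
  rw [← Polynomial.coeff_coe]
  have hco : ((DelYPoly γ (Tpoly U m) : Polynomial ℝ) : PowerSeries ℝ)
      = (PowerSeries.C (R := ℝ) 4 * PowerSeries.X - 1) * ((Tpoly U m : Polynomial ℝ) : PowerSeries ℝ)
        + (PowerSeries.X - 1) * fSeries γ := by
    rw [DelYPoly]
    push_cast [Polynomial.coe_sub, Polynomial.coe_add, Polynomial.coe_mul, Polynomial.coe_C,
      Polynomial.coe_X, Polynomial.coe_one, coe_fPoly]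
    rfl
  rw [hco, SY, map_add, map_add]
  congr 1
  exact coeff_mul_congr _ _ _ _ i (fun j _ => rfl)
    (fun j hj => coeff_coe_Tpoly U m j (le_trans hj h))

lemma coeff_DelU_eq (γ : ℝ) (U : ℕ → ℝ) (m i : ℕ) (h : i ≤ m) :
    (DelUPoly γ (Tpoly U m)).coeff i = PowerSeries.coeff i (SU γ U) := by
  rw [← Polynomial.coeff_coe]
  have hco : ((DelUPoly γ (Tpoly U m) : Polynomial ℝ) : PowerSeries ℝ)
      = 2 * ((Tpoly U m : Polynomial ℝ) : PowerSeries ℝ)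
        * (((Tpoly U m : Polynomial ℝ) : PowerSeries ℝ) + fSeries γ
          + PowerSeries.C (R := ℝ) 3 * PowerSeries.X * (1 - PowerSeries.X)) := by
    rw [DelUPoly]
    push_cast [Polynomial.coe_sub, Polynomial.coe_add, Polynomial.coe_mul, Polynomial.coe_C,
      Polynomial.coe_X, Polynomial.coe_one, coe_fPoly, coe_two]
    rfl
  rw [hco, SU]
  refine coeff_mul_congr _ _ _ _ i (fun j hj => ?_) (fun j hj => ?_)
  · rw [two_mul, two_mul, map_add, map_add, coeff_coe_Tpoly U m j (le_trans hj h)]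
  · rw [map_add, map_add, map_add, map_add, coeff_coe_Tpoly U m j (le_trans hj h)]


lemma Tpoly_succ (U : ℕ → ℝ) (n : ℕ) (hn : 1 ≤ n) :
    Tpoly U n = Tpoly U (n-1) + C (U n) * X ^ n := by
  have h : n - 1 + 1 = n := by omega
  rw [Tpoly, Tpoly, h, ← Finset.sum_range_succ (fun i => C (U i) * X ^ i) n]

lemma coeff_DelY_succ (γ : ℝ) (U : ℕ → ℝ) (n : ℕ) (hn : 1 ≤ n) :
    (DelYPoly γ (Tpoly U n)).coeff n = (DelYPoly γ (Tpoly U (n-1))).coeff n + c2 * U n := by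
  have hT := Tpoly_succ U n hn
  have hD : DelYPoly γ (Tpoly U n)
      = DelYPoly γ (Tpoly U (n-1)) + (C 4 * C (U n) * X ^ (n+1) - C (U n) * X ^ n) := by
    rw [DelYPoly, DelYPoly, hT]; ring
  rw [hD, Polynomial.coeff_add]
  congr 1
  simp [mul_assoc, Polynomial.coeff_C_mul, Polynomial.coeff_X_pow, c2]

lemma coeff_DelU_succ (γ : ℝ) (U : ℕ → ℝ) (n : ℕ) (hn : 1 ≤ n) (h0 : U 0 = epsP γ) :
    (DelUPoly γ (Tpoly U n)).coeff n = (DelUPoly γ (Tpoly U (n-1))).coeff n + c1 γ * U n := by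
  have hT := Tpoly_succ U n hn
  set P := Tpoly U (n-1) with hP
  have hD : DelUPoly γ (Tpoly U n)
      = DelUPoly γ P
        + (2 * C (U n) * (2 * P + C (U n) * X ^ n + fPoly γ + C 3 * X * (1 - X))) * X ^ n := by
    rw [DelUPoly, DelUPoly, hT]; ring
  rw [hD, Polynomial.coeff_add]
  congr 1
  have := Polynomial.coeff_mul_X_pow
    (2 * C (U n) * (2 * P + C (U n) * X ^ n + fPoly γ + C 3 * X * (1 - X))) n 0
  rw [zero_add] at this
  rw [this]
  have h0' : P.coeff 0 = U 0 := by rw [hP, coeff_Tpoly]; simp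
  have hXn : (C (U n) * X ^ n : Polynomial ℝ).coeff 0 = 0 := by
    simp [Polynomial.coeff_C_mul, Polynomial.coeff_X_pow]; omega
  simp [Polynomial.mul_coeff_zero, Polynomial.coeff_add, h0', hXn, fPoly, h0, c1]
  ring

lemma coeff_SY_zero (γ : ℝ) (U : ℕ → ℝ) (h0 : U 0 = epsP γ) :
    PowerSeries.coeff 0 (SY γ U) = 0 := by
  simp [SY, fSeries, PowerSeries.coeff_zero_eq_constantCoeff, map_add, map_mul, map_sub, h0]

lemma coeff_one_mul' (A B : PowerSeries ℝ) :
    PowerSeries.coeff 1 (A*B) = PowerSeries.coeff 0 A * PowerSeries.coeff 1 B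
      + PowerSeries.coeff 1 A * PowerSeries.coeff 0 B := by
  rw [PowerSeries.coeff_mul, Finset.Nat.sum_antidiagonal_eq_sum_range_succ_mk]
  simp [Finset.sum_range_succ]

lemma coeff_SY_one (γ : ℝ) (U : ℕ → ℝ) (h0 : U 0 = epsP γ)
    (h1 : U 1 = (lamMinus γ - c4 γ) / c2) :
    PowerSeries.coeff 1 (SY γ U) = lamMinus γ := by
  have hU1 : U 1 = c4 γ - lamMinus γ := by rw [h1]; simp [c2]; ring
  rw [SY, map_add, coeff_one_mul', coeff_one_mul']
  simp [fSeries, h0, hU1, c4, PowerSeries.coeff_zero_eq_constantCoeff,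
    PowerSeries.coeff_X_pow]
  ring

lemma lam_sum (γ : ℝ) : lamMinus γ + lamPlus γ = c1 γ + c4 γ := by
  rw [lamMinus, lamPlus]; ring


/-- Recursive formula for the power-series coefficients at the sonic point. -/
theorem coeff_recursion (γ : ℝ) (hγ : (Real.sqrt (5/3))⁻¹ < γ)
    (U : ℕ → ℝ)
    (h0 : U 0 = epsP γ)
    (h1 : U 1 = (lamMinus γ - c4 γ) / c2)
    (hODE :
      ((PowerSeries.C (R := ℝ) 4 * PowerSeries.X - 1) * PowerSeries.mk U
          + (PowerSeries.X - 1) * fSeries γ)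
        * PowerSeries.mk (fun n => ((n : ℝ) + 1) * U (n + 1))
      = 2 * PowerSeries.mk U
          * (PowerSeries.mk U + fSeries γ
              + PowerSeries.C (R := ℝ) 3 * PowerSeries.X * (1 - PowerSeries.X))) :
    ∀ n : ℕ, 2 ≤ n →
      (((n : ℝ) * lamMinus γ - lamPlus γ) * U n
          = (DelUPoly γ (Tpoly U (n - 1))).coeff n
            - ∑ i ∈ Finset.Icc 2 n,
                ((n : ℝ) + 1 - (i : ℝ)) * U (n + 1 - i)
                  * (DelYPoly γ (Tpoly U (n - 1))).coeff i) ∧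
      (DelUPoly γ (Tpoly U n)).coeff n
        = (DelUPoly γ (Tpoly U (n - 1))).coeff n + c1 γ * U n ∧
      (DelYPoly γ (Tpoly U n)).coeff n
        = (DelYPoly γ (Tpoly U (n - 1))).coeff n + c2 * U n := by
  intro n hn
  have hn1 : 1 ≤ n := by omega
  have h3 := coeff_DelY_succ γ U n hn1
  have h2 := coeff_DelU_succ γ U n hn1 h0
  refine ⟨?_, h2, h3⟩
  have hODE' : SY γ U * PowerSeries.mk (fun k => ((k : ℝ) + 1) * U (k + 1)) = SU γ U := hODE
  have hc := congrArg (PowerSeries.coeff n) hODE'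
  rw [PowerSeries.coeff_mul, Finset.Nat.sum_antidiagonal_eq_sum_range_succ_mk] at hc
  simp only [PowerSeries.coeff_mk] at hc
  -- RHS of hc
  rw [← coeff_DelU_eq γ U n n le_rfl, h2] at hc
  -- split the sum
  simp only [Nat.succ_eq_add_one] at hc
  set g : ℕ → ℝ := fun i =>
    PowerSeries.coeff i (SY γ U) * ((((n - i : ℕ) : ℝ) + 1) * U (n - i + 1)) with hg
  have hsplit : ∑ i ∈ Finset.range (n+1), g i
      = g 0 + g 1 + ∑ i ∈ Finset.Icc 2 n, g i := by
    rw [← Finset.sum_range_add_sum_Ico g (show 2 ≤ n+1 by omega)]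
    rw [Finset.sum_range_succ, Finset.sum_range_one, Finset.Ico_add_one_right_eq_Icc]
  rw [hsplit] at hc
  have hg0 : g 0 = 0 := by rw [hg]; simp [coeff_SY_zero γ U h0]
  have hg1 : g 1 = lamMinus γ * (n : ℝ) * U n := by
    rw [hg]
    simp only [coeff_SY_one γ U h0 h1]
    have e1 : n - 1 + 1 = n := by omega
    have e2 : ((n - 1 : ℕ) : ℝ) = (n : ℝ) - 1 := by
      rw [Nat.cast_sub hn1]; norm_num
    rw [e1, e2]; ring
  have hmid : ∑ i ∈ Finset.Icc 2 n, g i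
      = (∑ i ∈ Finset.Icc 2 n,
          ((n : ℝ) + 1 - (i : ℝ)) * U (n + 1 - i)
            * (DelYPoly γ (Tpoly U (n - 1))).coeff i)
        + c2 * U n * U 1 := by
    have key : ∀ i ∈ Finset.Icc 2 n, g i
        = ((n : ℝ) + 1 - (i : ℝ)) * U (n + 1 - i) * (DelYPoly γ (Tpoly U (n - 1))).coeff i
          + (if i = n then c2 * U n * U 1 else 0) := by
      intro i hi
      rw [Finset.mem_Icc] at hi
      have e1 : n - i + 1 = n + 1 - i := by omega
      have e2 : (((n - i : ℕ) : ℝ)) + 1 = (n : ℝ) + 1 - (i : ℝ) := by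
        rw [Nat.cast_sub (by omega)]; ring
      rw [hg]
      simp only [e1, e2]
      rcases eq_or_lt_of_le hi.2 with hie | hlt
      · subst hie
        rw [if_pos rfl]
        have : PowerSeries.coeff i (SY γ U)
            = (DelYPoly γ (Tpoly U (i - 1))).coeff i + c2 * U i := by
          rw [← coeff_DelY_eq γ U i i le_rfl, h3]
        rw [this]
        have e3 : i + 1 - i = 1 := by omega
        have e4 : ((i : ℝ) + 1 - (i : ℝ)) = 1 := by ring
        rw [e3, e4]; ring
      · rw [if_neg (by omega), ← coeff_DelY_eq γ U (n-1) i (by omega)]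
        ring
    rw [Finset.sum_congr rfl key, Finset.sum_add_distrib]
    congr 1
    rw [Finset.sum_ite_eq' (Finset.Icc 2 n) n (fun _ => c2 * U n * U 1),
      if_pos (by rw [Finset.mem_Icc]; omega)]
  rw [hg0, hg1, hmid] at hc
  have hU1 : U 1 = c4 γ - lamMinus γ := by rw [h1]; simp [c2]; ring
  have hlam := lam_sum γ
  have hc2 : c2 = -1 := rfl
  rw [hc2] at hc
  rw [hU1] at hc
  unfold c1 at hc hlam
  linear_combination hc - U n * hlam

end Stmt7
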